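/- arXiv:cs/0312040 — 2 statements merged into one kernel-verified Lean document; each statement's English description precedes it below -/
import Mathlib

section
/- Let SD be an AL action description, σ0 a state, a0 a compound action, and β¹_d(σ0,a0) the logic program encoding SD over one time step together with facts h(l,0) for l∈σ0 and o(a,0) for a∈a0, inertia rules, and consistency constraints. Then ⟨σ0,a0,σ1⟩ is a transition of the diagram described by SD if and only if σ1 = { l : h(l,1) ∈ A } for some answer set A of β¹_d(σ0,a0). -/
/-- A ground rule of A-Prolog: head (none = ⊥, i.e. a constraint),
positive body atoms, and default-negated body atoms. -/
structure ASPRule (L : Type) where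
  head : Option L
  pos : Set L
  neg : Set L

/-- `Closed X Y P`: `Y` is closed under the Gelfond–Lifschitz reduct of `P`
relative to `X`. -/
def Closed {L : Type} (X Y : Set L) (P : Set (ASPRule L)) : Prop :=
  ∀ r ∈ P, (∀ l ∈ r.neg, l ∉ X) → r.pos ⊆ Y → ∃ l, r.head = some l ∧ l ∈ Y

/-- `X` is an answer set of `P`: `X` is minimal among the sets closed under
the reduct `P^X`. -/
def AnswerSet {L : Type} (P : Set (ASPRule L)) (X : Set L) : Prop :=
  Closed X X P ∧ ∀ Y ⊆ X, Closed X Y P → Y = X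

/-- A fact. -/
def fact {L : Type} (a : L) : ASPRule L := ⟨some a, ∅, ∅⟩
/-- A fluent literal: a fluent together with a sign (`true` = positive). -/
abbrev FLit (F : Type) := F × Bool

/-- The complement of a fluent literal. -/
def fcompl {F : Type} (l : FLit F) : FLit F := (l.1, !l.2)

/-- A dynamic causal law `causes(act, hd, pre)`. -/
structure DynLaw (A F : Type) where
  act : A
  hd : FLit F
  pre : Set (FLit F)

/-- A static causal law `caused(hd, pre)`. -/
structure StatLaw (F : Type) where
  hd : FLit F
  pre : Set (FLit F)

/-- An executability condition `impossible_if(act, pre)`. -/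
structure ImpLaw (A F : Type) where
  act : A
  pre : Set (FLit F)

/-- An action description of the language AL. -/
structure ActionDescr (A F : Type) where
  dyn : Set (DynLaw A F)
  stat : Set (StatLaw F)
  imp : Set (ImpLaw A F)

/-- Completeness: each fluent or its negation belongs to `σ`. -/
def FComplete {F : Type} (σ : Set (FLit F)) : Prop :=
  ∀ f : F, (f, true) ∈ σ ∨ (f, false) ∈ σ

/-- Consistency: no fluent literal occurs together with its complement. -/
def FConsistent {F : Type} (σ : Set (FLit F)) : Prop :=
  ∀ l ∈ σ, fcompl l ∉ σ

/-- Closure under the static causal laws. -/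
def ClosedStat {A F : Type} (D : ActionDescr A F) (σ : Set (FLit F)) : Prop :=
  ∀ s ∈ D.stat, s.pre ⊆ σ → s.hd ∈ σ

/-- A state of the transition system described by `D`. -/
def IsState {A F : Type} (D : ActionDescr A F) (σ : Set (FLit F)) : Prop :=
  FComplete σ ∧ FConsistent σ ∧ ClosedStat D σ

/-- `Cn_Z(S)`: the smallest set of fluent literals containing `S` and closed
under the static causal laws of `D`. -/
def CnZ {A F : Type} (D : ActionDescr A F) (S : Set (FLit F)) : Set (FLit F) :=
  ⋂₀ { X | S ⊆ X ∧ ∀ s ∈ D.stat, s.pre ⊆ X → s.hd ∈ X }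

/-- `E(a,σ)`: the direct effects of compound action `a` in `σ`. -/
def dirEff {A F : Type} (D : ActionDescr A F) (a : Set A) (σ : Set (FLit F)) :
    Set (FLit F) :=
  { l | ∃ d ∈ D.dyn, d.act ∈ a ∧ d.pre ⊆ σ ∧ d.hd = l }

/-- The McCain–Turner transition relation: `⟨σ,a,σ'⟩` is a transition iff
`σ`,`σ'` are states, no executability condition for a member of `a` is
satisfied in `σ`, and `σ' = Cn_Z(E(a,σ) ∪ (σ ∩ σ'))`. -/
def ALTrans {A F : Type} (D : ActionDescr A F) (σ : Set (FLit F)) (a : Set A)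
    (σ' : Set (FLit F)) : Prop :=
  IsState D σ ∧ IsState D σ' ∧
  (∀ i ∈ D.imp, i.act ∈ a → ¬ i.pre ⊆ σ) ∧
  σ' = CnZ D (dirEff D a σ ∪ (σ ∩ σ'))

/-- Atoms of the direct encoding: `h(l,t)` and `o(a,t)`. -/
inductive AtomD (A F : Type) where
  | h : FLit F → ℕ → AtomD A F
  | o : A → ℕ → AtomD A F

/-- The one-step direct encoding `β¹_d(SD,σ0,a0)`: rules for dynamic laws,
static laws (at both time points), executability conditions, inertia,
consistency constraints, and the facts `h(l,0)` for `l ∈ σ0` and `o(a,0)`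
for `a ∈ a0`. -/
def beta1 {A F : Type} (D : ActionDescr A F) (σ0 : Set (FLit F)) (a0 : Set A) :
    Set (ASPRule (AtomD A F)) :=
  { r | ∃ d ∈ D.dyn,
      r = ⟨some (AtomD.h d.hd 1),
           (fun l => AtomD.h l 0) '' d.pre ∪ {AtomD.o d.act 0}, ∅⟩ } ∪
  { r | ∃ s ∈ D.stat, ∃ t ≤ 1,
      r = ⟨some (AtomD.h s.hd t), (fun l => AtomD.h l t) '' s.pre, ∅⟩ } ∪
  { r | ∃ i ∈ D.imp,
      r = ⟨none, (fun l => AtomD.h l 0) '' i.pre ∪ {AtomD.o i.act 0}, ∅⟩ } ∪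
  { r | ∃ l : FLit F,
      r = ⟨some (AtomD.h l 1), {AtomD.h l 0}, {AtomD.h (fcompl l) 1}⟩ } ∪
  { r | ∃ l : FLit F, ∃ t ≤ 1,
      r = ⟨none, {AtomD.h l t, AtomD.h (fcompl l) t}, ∅⟩ } ∪
  { r | ∃ l ∈ σ0, r = fact (AtomD.h l 0) } ∪
  { r | ∃ a ∈ a0, r = fact (AtomD.o a 0) }


namespace Beta1Aux

variable {A F : Type}

lemma fcompl_fcompl (l : FLit F) : fcompl (fcompl l) = l := by
  simp [fcompl]

lemma mem_or_compl {σ : Set (FLit F)} (h : FComplete σ) (l : FLit F) :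
    l ∈ σ ∨ fcompl l ∈ σ := by
  obtain ⟨f, b⟩ := l
  rcases b <;> rcases h f with h1 | h2 <;> simp [fcompl, *]

lemma subset_CnZ (D : ActionDescr A F) (S : Set (FLit F)) : S ⊆ CnZ D S :=
  fun l hl => fun X hX => hX.1 hl

lemma CnZ_stat (D : ActionDescr A F) (S : Set (FLit F)) :
    ∀ s ∈ D.stat, s.pre ⊆ CnZ D S → s.hd ∈ CnZ D S := by
  intro s hs hpre X hX
  exact hX.2 s hs (fun l hl => hpre hl X hX)

lemma CnZ_le (D : ActionDescr A F) {S X : Set (FLit F)} (h1 : S ⊆ X)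
    (h2 : ∀ s ∈ D.stat, s.pre ⊆ X → s.hd ∈ X) : CnZ D S ⊆ X :=
  fun l hl => hl X ⟨h1, h2⟩

/-- The intended answer set. -/
def encode (σ0 : Set (FLit F)) (a0 : Set A) (σ1 : Set (FLit F)) :
    Set (AtomD A F) :=
  { x | (∃ l ∈ σ0, x = AtomD.h l 0) ∨ (∃ a ∈ a0, x = AtomD.o a 0) ∨
        (∃ l ∈ σ1, x = AtomD.h l 1) }

@[simp] lemma encode_h0 {σ0 : Set (FLit F)} {a0 : Set A} {σ1 : Set (FLit F)}
    {l : FLit F} : AtomD.h l 0 ∈ encode σ0 a0 σ1 ↔ l ∈ σ0 := by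
  constructor
  · rintro (⟨l', hl', h⟩ | ⟨a, ha, h⟩ | ⟨l', hl', h⟩) <;> simp_all
  · intro h; exact Or.inl ⟨l, h, rfl⟩

@[simp] lemma encode_h1 {σ0 : Set (FLit F)} {a0 : Set A} {σ1 : Set (FLit F)}
    {l : FLit F} : AtomD.h l 1 ∈ encode σ0 a0 σ1 ↔ l ∈ σ1 := by
  constructor
  · rintro (⟨l', hl', h⟩ | ⟨a, ha, h⟩ | ⟨l', hl', h⟩) <;> simp_all
  · intro h; exact Or.inr (Or.inr ⟨l, h, rfl⟩)

@[simp] lemma encode_o0 {σ0 : Set (FLit F)} {a0 : Set A} {σ1 : Set (FLit F)}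
    {a : A} : AtomD.o a 0 ∈ encode σ0 a0 σ1 ↔ a ∈ a0 := by
  constructor
  · rintro (⟨l', hl', h⟩ | ⟨a', ha', h⟩ | ⟨l', hl', h⟩) <;> simp_all
  · intro h; exact Or.inr (Or.inl ⟨a, h, rfl⟩)

end Beta1Aux

namespace Beta1Aux
variable {A F : Type} {D : ActionDescr A F} {σ0 : Set (FLit F)} {a0 : Set A}

lemma mem_beta1_dyn {d : DynLaw A F} (hd : d ∈ D.dyn) :
    (⟨some (AtomD.h d.hd 1),
      (fun l => AtomD.h l 0) '' d.pre ∪ {AtomD.o d.act 0}, ∅⟩ :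
      ASPRule (AtomD A F)) ∈ beta1 D σ0 a0 := by
  simp only [beta1, Set.mem_union, Set.mem_setOf_eq]
  exact Or.inl (Or.inl (Or.inl (Or.inl (Or.inl (Or.inl ⟨d, hd, rfl⟩)))))

lemma mem_beta1_stat {s : StatLaw F} (hs : s ∈ D.stat) {t : ℕ} (ht : t ≤ 1) :
    (⟨some (AtomD.h s.hd t), (fun l => AtomD.h l t) '' s.pre, ∅⟩ :
      ASPRule (AtomD A F)) ∈ beta1 D σ0 a0 := by
  simp only [beta1, Set.mem_union, Set.mem_setOf_eq]
  exact Or.inl (Or.inl (Or.inl (Or.inl (Or.inl (Or.inr ⟨s, hs, t, ht, rfl⟩)))))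

lemma mem_beta1_imp {i : ImpLaw A F} (hi : i ∈ D.imp) :
    (⟨none, (fun l => AtomD.h l 0) '' i.pre ∪ {AtomD.o i.act 0}, ∅⟩ :
      ASPRule (AtomD A F)) ∈ beta1 D σ0 a0 := by
  simp only [beta1, Set.mem_union, Set.mem_setOf_eq]
  exact Or.inl (Or.inl (Or.inl (Or.inl (Or.inr ⟨i, hi, rfl⟩))))

lemma mem_beta1_inertia (l : FLit F) :
    (⟨some (AtomD.h l 1), {AtomD.h l 0}, {AtomD.h (fcompl l) 1}⟩ :
      ASPRule (AtomD A F)) ∈ beta1 D σ0 a0 := by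
  simp only [beta1, Set.mem_union, Set.mem_setOf_eq]
  exact Or.inl (Or.inl (Or.inl (Or.inr ⟨l, rfl⟩)))

lemma mem_beta1_consist (l : FLit F) {t : ℕ} (ht : t ≤ 1) :
    (⟨none, {AtomD.h l t, AtomD.h (fcompl l) t}, ∅⟩ :
      ASPRule (AtomD A F)) ∈ beta1 D σ0 a0 := by
  simp only [beta1, Set.mem_union, Set.mem_setOf_eq]
  exact Or.inl (Or.inl (Or.inr ⟨l, t, ht, rfl⟩))

lemma mem_beta1_facth {l : FLit F} (hl : l ∈ σ0) :
    (fact (AtomD.h l 0) : ASPRule (AtomD A F)) ∈ beta1 D σ0 a0 := by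
  simp only [beta1, Set.mem_union, Set.mem_setOf_eq]
  exact Or.inl (Or.inr ⟨l, hl, rfl⟩)

lemma mem_beta1_facto {a : A} (ha : a ∈ a0) :
    (fact (AtomD.o a 0) : ASPRule (AtomD A F)) ∈ beta1 D σ0 a0 := by
  simp only [beta1, Set.mem_union, Set.mem_setOf_eq]
  exact Or.inr ⟨a, ha, rfl⟩

/-- Empty neg condition. -/
lemma neg_empty {X : Set (AtomD A F)} :
    ∀ l ∈ (∅ : Set (AtomD A F)), l ∉ X := by simp

end Beta1Aux

namespace Beta1Aux
variable {A F : Type} {D : ActionDescr A F} {σ0 : Set (FLit F)} {a0 : Set A}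
variable {X Y : Set (AtomD A F)}

lemma closed_dyn (hC : Closed X Y (beta1 D σ0 a0)) {d : DynLaw A F}
    (hd : d ∈ D.dyn) (h1 : ∀ l ∈ d.pre, AtomD.h l 0 ∈ Y)
    (h2 : AtomD.o d.act 0 ∈ Y) : AtomD.h d.hd 1 ∈ Y := by
  obtain ⟨x, hx, hmem⟩ := hC _ (mem_beta1_dyn hd) neg_empty
    (Set.union_subset (by rintro _ ⟨l, hl, rfl⟩; exact h1 l hl)
      (Set.singleton_subset_iff.mpr h2))
  obtain rfl : AtomD.h d.hd 1 = x := by injection hx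
  exact hmem

lemma closed_stat (hC : Closed X Y (beta1 D σ0 a0)) {s : StatLaw F}
    (hs : s ∈ D.stat) {t : ℕ} (ht : t ≤ 1)
    (h1 : ∀ l ∈ s.pre, AtomD.h l t ∈ Y) : AtomD.h s.hd t ∈ Y := by
  obtain ⟨x, hx, hmem⟩ := hC _ (mem_beta1_stat hs ht) neg_empty
    (by rintro _ ⟨l, hl, rfl⟩; exact h1 l hl)
  obtain rfl : AtomD.h s.hd t = x := by injection hx
  exact hmem

lemma closed_imp (hC : Closed X Y (beta1 D σ0 a0)) {i : ImpLaw A F}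
    (hi : i ∈ D.imp) (h1 : ∀ l ∈ i.pre, AtomD.h l 0 ∈ Y)
    (h2 : AtomD.o i.act 0 ∈ Y) : False := by
  obtain ⟨x, hx, -⟩ := hC _ (mem_beta1_imp hi) neg_empty
    (Set.union_subset (by rintro _ ⟨l, hl, rfl⟩; exact h1 l hl)
      (Set.singleton_subset_iff.mpr h2))
  simp at hx

lemma closed_inertia (hC : Closed X Y (beta1 D σ0 a0)) {l : FLit F}
    (h1 : AtomD.h l 0 ∈ Y) (h2 : AtomD.h (fcompl l) 1 ∉ X) :
    AtomD.h l 1 ∈ Y := by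
  obtain ⟨x, hx, hmem⟩ := hC _ (mem_beta1_inertia l)
    (by rintro x hx; rw [Set.mem_singleton_iff] at hx; subst hx; exact h2)
    (Set.singleton_subset_iff.mpr h1)
  obtain rfl : AtomD.h l 1 = x := by injection hx
  exact hmem

lemma closed_consist (hC : Closed X Y (beta1 D σ0 a0)) {l : FLit F} {t : ℕ}
    (ht : t ≤ 1) (h1 : AtomD.h l t ∈ Y) (h2 : AtomD.h (fcompl l) t ∈ Y) :
    False := by
  obtain ⟨x, hx, -⟩ := hC _ (mem_beta1_consist l ht) neg_empty
    (by rintro x (rfl | hx)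
        · exact h1
        · rw [Set.mem_singleton_iff] at hx; subst hx; exact h2)
  simp at hx

lemma closed_facth (hC : Closed X Y (beta1 D σ0 a0)) {l : FLit F}
    (hl : l ∈ σ0) : AtomD.h l 0 ∈ Y := by
  obtain ⟨x, hx, hmem⟩ := hC _ (mem_beta1_facth hl) neg_empty
    (Set.empty_subset _)
  obtain rfl : AtomD.h l 0 = x := by injection hx
  exact hmem

lemma closed_facto (hC : Closed X Y (beta1 D σ0 a0)) {a : A}
    (ha : a ∈ a0) : AtomD.o a 0 ∈ Y := by
  obtain ⟨x, hx, hmem⟩ := hC _ (mem_beta1_facto ha) neg_empty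
    (Set.empty_subset _)
  obtain rfl : AtomD.o a 0 = x := by injection hx
  exact hmem

end Beta1Aux

namespace Beta1Aux
variable {A F : Type}

lemma forward (D : ActionDescr A F) (σ0 : Set (FLit F)) (a0 : Set A)
    (hσ0 : IsState D σ0) {σ1 : Set (FLit F)} (h : ALTrans D σ0 a0 σ1) :
    AnswerSet (beta1 D σ0 a0) (encode σ0 a0 σ1) := by
  obtain ⟨-, hσ1, himp, heq⟩ := h
  constructor
  · -- Closed
    intro r hr hneg hpos
    simp only [beta1, Set.mem_union, Set.mem_setOf_eq] at hr
    rcases hr with ((((((⟨d, hd, rfl⟩ | ⟨s, hs, t, ht, rfl⟩) | ⟨i, hi, rfl⟩) |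
      ⟨l, rfl⟩) | ⟨l, t, ht, rfl⟩) | ⟨l, hl, rfl⟩) | ⟨a, ha, rfl⟩)
    · -- dynamic
      have hpre : d.pre ⊆ σ0 := fun l hl =>
        encode_h0.mp (hpos (Set.mem_union_left _ ⟨l, hl, rfl⟩))
      have hact : d.act ∈ a0 :=
        encode_o0.mp (hpos (Set.mem_union_right _ rfl))
      have : d.hd ∈ σ1 := by
        rw [heq]
        exact subset_CnZ _ _ (Set.mem_union_left _ ⟨d, hd, hact, hpre, rfl⟩)
      exact ⟨_, rfl, encode_h1.mpr this⟩
    · -- static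
      interval_cases t
      · have hpre : s.pre ⊆ σ0 := fun l hl => encode_h0.mp (hpos ⟨l, hl, rfl⟩)
        exact ⟨_, rfl, encode_h0.mpr (hσ0.2.2 s hs hpre)⟩
      · have hpre : s.pre ⊆ σ1 := fun l hl => encode_h1.mp (hpos ⟨l, hl, rfl⟩)
        exact ⟨_, rfl, encode_h1.mpr (hσ1.2.2 s hs hpre)⟩
    · -- impossible
      have hpre : i.pre ⊆ σ0 := fun l hl =>
        encode_h0.mp (hpos (Set.mem_union_left _ ⟨l, hl, rfl⟩))
      have hact : i.act ∈ a0 :=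
        encode_o0.mp (hpos (Set.mem_union_right _ rfl))
      exact (himp i hi hact hpre).elim
    · -- inertia
      have h2 : AtomD.h (fcompl l) 1 ∉ encode σ0 a0 σ1 :=
        hneg _ (Set.mem_singleton _)
      have hl1 : l ∈ σ1 := by
        rcases mem_or_compl hσ1.1 l with h | h
        · exact h
        · exact absurd (encode_h1.mpr h) h2
      exact ⟨_, rfl, encode_h1.mpr hl1⟩
    · -- consistency
      interval_cases t
      · have h1 : l ∈ σ0 := encode_h0.mp (hpos (Set.mem_insert _ _))
        have h2 : fcompl l ∈ σ0 := encode_h0.mp (hpos (Set.mem_insert_of_mem _ rfl))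
        exact (hσ0.2.1 l h1 h2).elim
      · have h1 : l ∈ σ1 := encode_h1.mp (hpos (Set.mem_insert _ _))
        have h2 : fcompl l ∈ σ1 := encode_h1.mp (hpos (Set.mem_insert_of_mem _ rfl))
        exact (hσ1.2.1 l h1 h2).elim
    · exact ⟨_, rfl, encode_h0.mpr hl⟩
    · exact ⟨_, rfl, encode_o0.mpr ha⟩
  · -- minimality
    intro Y hYX hC
    apply Set.Subset.antisymm hYX
    have hfact0 : ∀ l ∈ σ0, AtomD.h l 0 ∈ Y := fun l hl => closed_facth hC hl
    have hfacto : ∀ a ∈ a0, AtomD.o a 0 ∈ Y := fun a ha => closed_facto hC ha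
    have hσ1Y : ∀ l ∈ σ1, AtomD.h l 1 ∈ Y := by
      have hsub : σ1 ⊆ {l | AtomD.h l 1 ∈ Y} := by
        conv_lhs => rw [heq]
        apply CnZ_le
        · rintro l (⟨d, hd, hact, hpre, rfl⟩ | ⟨hl0, hl1⟩)
          · exact closed_dyn hC hd (fun l hl => hfact0 l (hpre hl)) (hfacto _ hact)
          · exact closed_inertia hC (hfact0 l hl0)
              (fun hmem => hσ1.2.1 l hl1 (encode_h1.mp hmem))
        · intro s hs hpre
          exact closed_stat hC hs le_rfl (fun l hl => hpre hl)
      exact fun l hl => hsub hl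
    rintro x (⟨l, hl, rfl⟩ | ⟨a, ha, rfl⟩ | ⟨l, hl, rfl⟩)
    exacts [hfact0 l hl, hfacto a ha, hσ1Y l hl]

end Beta1Aux

namespace Beta1Aux
variable {A F : Type}

lemma backward (D : ActionDescr A F) (σ0 : Set (FLit F)) (a0 : Set A)
    (hσ0 : IsState D σ0) {X : Set (AtomD A F)}
    (hX : AnswerSet (beta1 D σ0 a0) X) :
    ALTrans D σ0 a0 {l | AtomD.h l 1 ∈ X} := by
  obtain ⟨hCX, hmin⟩ := hX
  set σ1 : Set (FLit F) := {l | AtomD.h l 1 ∈ X} with hσ1def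
  have hmem1 : ∀ l : FLit F, l ∈ σ1 ↔ AtomD.h l 1 ∈ X := fun l => Iff.rfl
  -- Step A: characterization of X
  have hGood : ∀ x ∈ X, (∃ l ∈ σ0, x = AtomD.h l 0) ∨
      (∃ l : FLit F, x = AtomD.h l 1) ∨ (∃ a ∈ a0, x = AtomD.o a 0) := by
    set P : AtomD A F → Prop := fun x => (∃ l ∈ σ0, x = AtomD.h l 0) ∨
      (∃ l : FLit F, x = AtomD.h l 1) ∨ (∃ a ∈ a0, x = AtomD.o a 0) with hP
    set Y : Set (AtomD A F) := {x ∈ X | P x} with hY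
    have hYX : Y ⊆ X := fun x hx => hx.1
    have hCY : Closed X Y (beta1 D σ0 a0) := by
      intro r hr hneg hpos
      have hposX : r.pos ⊆ X := hpos.trans hYX
      simp only [beta1, Set.mem_union, Set.mem_setOf_eq] at hr
      rcases hr with ((((((⟨d, hd, rfl⟩ | ⟨s, hs, t, ht, rfl⟩) | ⟨i, hi, rfl⟩) |
        ⟨l, rfl⟩) | ⟨l, t, ht, rfl⟩) | ⟨l, hl, rfl⟩) | ⟨a, ha, rfl⟩)
      · -- dynamic
        have hx : AtomD.h d.hd 1 ∈ X := closed_dyn hCX hd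
          (fun l hl => hposX (Set.mem_union_left _ ⟨l, hl, rfl⟩))
          (hposX (Set.mem_union_right _ rfl))
        exact ⟨_, rfl, hx, Or.inr (Or.inl ⟨d.hd, rfl⟩)⟩
      · -- static
        interval_cases t
        · have hpre : s.pre ⊆ σ0 := by
            intro l hl
            rcases (hpos ⟨l, hl, rfl⟩).2 with ⟨l', hl', he⟩ | ⟨l', he⟩ | ⟨a, ha, he⟩
            · replace he : AtomD.h l 0 = AtomD.h l' 0 := he
              injection he with h1 h2
              exact h1 ▸ hl'
            · replace he : AtomD.h l 0 = AtomD.h l' 1 := he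
              injection he with h1 h2
              exact (Nat.zero_ne_one h2).elim
            · simp at he
          have hx : AtomD.h s.hd 0 ∈ X :=
            closed_stat hCX hs (by norm_num) (fun l hl => hposX ⟨l, hl, rfl⟩)
          exact ⟨_, rfl, hx, Or.inl ⟨s.hd, hσ0.2.2 s hs hpre, rfl⟩⟩
        · have hx : AtomD.h s.hd 1 ∈ X :=
            closed_stat hCX hs le_rfl (fun l hl => hposX ⟨l, hl, rfl⟩)
          exact ⟨_, rfl, hx, Or.inr (Or.inl ⟨s.hd, rfl⟩)⟩
      · -- impossible
        obtain ⟨x, hx, -⟩ := hCX _ (mem_beta1_imp hi) hneg hposX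
        simp at hx
      · -- inertia
        have hx : AtomD.h l 1 ∈ X := closed_inertia hCX
          (hposX (Set.mem_singleton _)) (hneg _ (Set.mem_singleton _))
        exact ⟨_, rfl, hx, Or.inr (Or.inl ⟨l, rfl⟩)⟩
      · -- consistency
        obtain ⟨x, hx, -⟩ := hCX _ (mem_beta1_consist l ht) hneg hposX
        simp at hx
      · exact ⟨_, rfl, closed_facth hCX hl, Or.inl ⟨l, hl, rfl⟩⟩
      · exact ⟨_, rfl, closed_facto hCX ha, Or.inr (Or.inr ⟨a, ha, rfl⟩)⟩
    have hYeq : Y = X := hmin Y hYX hCY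
    intro x hx
    have hx' : x ∈ Y := by rw [hYeq]; exact hx
    exact hx'.2
  have hh0 : ∀ l : FLit F, AtomD.h l 0 ∈ X ↔ l ∈ σ0 := by
    intro l
    constructor
    · intro h
      rcases hGood _ h with ⟨l', hl', he⟩ | ⟨l', he⟩ | ⟨a, ha, he⟩
      · injection he with h1 h2
        exact h1 ▸ hl'
      · injection he with h1 h2
        exact (Nat.zero_ne_one h2).elim
      · simp at he
    · exact fun h => closed_facth hCX h
  have ho0 : ∀ a : A, AtomD.o a 0 ∈ X ↔ a ∈ a0 := by
    intro a
    constructor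
    · intro h
      rcases hGood _ h with ⟨l', hl', he⟩ | ⟨l', he⟩ | ⟨a', ha', he⟩
      · simp at he
      · simp at he
      · injection he with h1
        exact h1 ▸ ha'
    · exact fun h => closed_facto hCX h
  -- Step B: σ1 is a state
  have hcomp : FComplete σ1 := by
    have key : ∀ l : FLit F, l ∈ σ0 → l ∈ σ1 ∨ fcompl l ∈ σ1 := by
      intro l hl
      by_cases hc : fcompl l ∈ σ1
      · exact Or.inr hc
      · exact Or.inl (closed_inertia hCX (closed_facth hCX hl) hc)
    intro f
    rcases mem_or_compl hσ0.1 (f, true) with h | h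
    · rcases key _ h with h' | h'
      · exact Or.inl h'
      · exact Or.inr (by simpa [fcompl] using h')
    · rcases key _ h with h' | h'
      · exact Or.inr (by simpa [fcompl] using h')
      · exact Or.inl (by simpa [fcompl] using h')
  have hcons : FConsistent σ1 := fun l hl hlc => (closed_consist hCX le_rfl hl hlc).elim
  have hstat1 : ClosedStat D σ1 :=
    fun s hs hpre => closed_stat hCX hs le_rfl (fun l hl => hpre hl)
  -- Step C: executability
  have himp : ∀ i ∈ D.imp, i.act ∈ a0 → ¬ i.pre ⊆ σ0 := fun i hi hact hpre =>
    closed_imp hCX hi (fun l hl => (hh0 l).mpr (hpre hl)) ((ho0 _).mpr hact)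
  -- Step D: direct effects
  have hdir : dirEff D a0 σ0 ⊆ σ1 := by
    rintro l ⟨d, hd, hact, hpre, rfl⟩
    exact closed_dyn hCX hd (fun l hl => (hh0 l).mpr (hpre hl)) ((ho0 _).mpr hact)
  -- Step E: the McCain–Turner equation
  set C : Set (FLit F) := CnZ D (dirEff D a0 σ0 ∪ (σ0 ∩ σ1)) with hC
  have hsup : C ⊆ σ1 :=
    CnZ_le D (Set.union_subset hdir Set.inter_subset_right) hstat1
  have hsub : σ1 ⊆ C := by
    set P : AtomD A F → Prop := fun x => ∀ l : FLit F, x = AtomD.h l 1 → l ∈ C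
      with hP
    set Y : Set (AtomD A F) := {x ∈ X | P x} with hY
    have hYX : Y ⊆ X := fun x hx => hx.1
    have hCY : Closed X Y (beta1 D σ0 a0) := by
      intro r hr hneg hpos
      have hposX : r.pos ⊆ X := hpos.trans hYX
      simp only [beta1, Set.mem_union, Set.mem_setOf_eq] at hr
      rcases hr with ((((((⟨d, hd, rfl⟩ | ⟨s, hs, t, ht, rfl⟩) | ⟨i, hi, rfl⟩) |
        ⟨l, rfl⟩) | ⟨l, t, ht, rfl⟩) | ⟨l, hl, rfl⟩) | ⟨a, ha, rfl⟩)
      · -- dynamic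
        have hpre : d.pre ⊆ σ0 := fun l hl =>
          (hh0 l).mp (hposX (Set.mem_union_left _ ⟨l, hl, rfl⟩))
        have hact : d.act ∈ a0 :=
          (ho0 _).mp (hposX (Set.mem_union_right _ rfl))
        have hx : AtomD.h d.hd 1 ∈ X := closed_dyn hCX hd
          (fun l hl => hposX (Set.mem_union_left _ ⟨l, hl, rfl⟩))
          (hposX (Set.mem_union_right _ rfl))
        have hin : d.hd ∈ C :=
          subset_CnZ _ _ (Set.mem_union_left _ ⟨d, hd, hact, hpre, rfl⟩)
        refine ⟨_, rfl, hx, ?_⟩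
        intro l' he
        injection he with h1 h2
        exact h1 ▸ hin
      · -- static
        interval_cases t
        · have hx : AtomD.h s.hd 0 ∈ X :=
            closed_stat hCX hs (by norm_num) (fun l hl => hposX ⟨l, hl, rfl⟩)
          refine ⟨_, rfl, hx, ?_⟩
          intro l' he
          injection he with h1 h2
          exact (Nat.zero_ne_one h2).elim
        · have hpre : s.pre ⊆ C := by
            intro l hl
            exact (hpos ⟨l, hl, rfl⟩).2 l rfl
          have hx : AtomD.h s.hd 1 ∈ X :=
            closed_stat hCX hs le_rfl (fun l hl => hposX ⟨l, hl, rfl⟩)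
          refine ⟨_, rfl, hx, ?_⟩
          intro l' he
          injection he with h1 h2
          exact h1 ▸ CnZ_stat D _ s hs hpre
      · -- impossible
        obtain ⟨x, hx, -⟩ := hCX _ (mem_beta1_imp hi) hneg hposX
        simp at hx
      · -- inertia
        have hl0 : l ∈ σ0 := (hh0 l).mp (hposX (Set.mem_singleton _))
        have hx : AtomD.h l 1 ∈ X := closed_inertia hCX
          (hposX (Set.mem_singleton _)) (hneg _ (Set.mem_singleton _))
        have hl1 : l ∈ σ1 := hx
        have hin : l ∈ C := subset_CnZ _ _ (Set.mem_union_right _ ⟨hl0, hl1⟩)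
        refine ⟨_, rfl, hx, ?_⟩
        intro l' he
        injection he with h1 h2
        exact h1 ▸ hin
      · -- consistency
        obtain ⟨x, hx, -⟩ := hCX _ (mem_beta1_consist l ht) hneg hposX
        simp at hx
      · refine ⟨_, rfl, closed_facth hCX hl, ?_⟩
        intro l' he
        injection he with h1 h2
        exact (Nat.zero_ne_one h2).elim
      · refine ⟨_, rfl, closed_facto hCX ha, ?_⟩
        intro l' he
        simp at he
    have hYeq : Y = X := hmin Y hYX hCY
    intro l hl
    have hx' : AtomD.h l 1 ∈ Y := by rw [hYeq]; exact hl
    exact hx'.2 l rfl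
  exact ⟨hσ0, ⟨hcomp, hcons, hstat1⟩, himp, Set.Subset.antisymm hsub hsup⟩

end Beta1Aux


/-- for a state `σ0` and compound action `a0`, `⟨σ0,a0,σ1⟩` is a
transition of the diagram described by `SD` iff `σ1 = { l : h(l,1) ∈ A }` for
some answer set `A` of `β¹_d(σ0,a0)`. -/
theorem beta1_transition {A F : Type} (D : ActionDescr A F)
    (σ0 : Set (FLit F)) (a0 : Set A) (hσ0 : IsState D σ0) (σ1 : Set (FLit F)) :
    ALTrans D σ0 a0 σ1 ↔
      ∃ X : Set (AtomD A F), AnswerSet (beta1 D σ0 a0) X ∧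
        σ1 = { l | AtomD.h l 1 ∈ X } := by
  constructor
  · intro h
    refine ⟨Beta1Aux.encode σ0 a0 σ1, Beta1Aux.forward D σ0 a0 hσ0 h, ?_⟩
    ext l
    simp [Beta1Aux.encode_h1]
  · rintro ⟨X, hX, rfl⟩
    exact Beta1Aux.backward D σ0 a0 hσ0 hX
end

section
/- Let SD be an AL action description and M = ⟨σ0,a0,σ1,...,a_{n-1},σn⟩ a sequence with σ0 a state. Then M is a trajectory of the transition diagram described by SD if and only if M is defined by an answer set of the program β^n_d(M) consisting of the n-step direct encoding of SD, the facts h(l,0) for l ∈ σ0, and the occurrence facts o(a,t) for a ∈ a_t, 0 ≤ t < n. -/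
/-- The `n`-step direct encoding `β^n_d(SD,M)` for a sequence `M` with initial
state `σ0` and actions `a t` (`t < n`): rules for dynamic laws, static laws,
executability conditions, inertia, consistency constraints, the facts
`h(l,0)` for `l ∈ σ0`, and the occurrence facts `o(e,t)` for `e ∈ a t`. -/
def betaNd {A F : Type} (D : ActionDescr A F) (n : ℕ) (σ0 : Set (FLit F))
    (a : ℕ → Set A) : Set (ASPRule (AtomD A F)) :=
  { r | ∃ d ∈ D.dyn, ∃ t < n,
      r = ⟨some (AtomD.h d.hd (t+1)),
           (fun l => AtomD.h l t) '' d.pre ∪ {AtomD.o d.act t}, ∅⟩ } ∪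
  { r | ∃ s ∈ D.stat, ∃ t ≤ n,
      r = ⟨some (AtomD.h s.hd t), (fun l => AtomD.h l t) '' s.pre, ∅⟩ } ∪
  { r | ∃ i ∈ D.imp, ∃ t < n,
      r = ⟨none, (fun l => AtomD.h l t) '' i.pre ∪ {AtomD.o i.act t}, ∅⟩ } ∪
  { r | ∃ l : FLit F, ∃ t < n,
      r = ⟨some (AtomD.h l (t+1)), {AtomD.h l t}, {AtomD.h (fcompl l) (t+1)}⟩ } ∪
  { r | ∃ l : FLit F, ∃ t ≤ n,
      r = ⟨none, {AtomD.h l t, AtomD.h (fcompl l) t}, ∅⟩ } ∪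
  { r | ∃ l ∈ σ0, r = fact (AtomD.h l 0) } ∪
  { r | ∃ t < n, ∃ e ∈ a t, r = fact (AtomD.o e t) }

/-- A set `X` of atoms defines the sequence `⟨σ0,a0,...,a_{n-1},σn⟩`. -/
def Defines {A F : Type} (n : ℕ) (X : Set (AtomD A F)) (σ : ℕ → Set (FLit F))
    (a : ℕ → Set A) : Prop :=
  (∀ k ≤ n, σ k = { l | AtomD.h l k ∈ X }) ∧
  (∀ k < n, a k = { e | AtomD.o e k ∈ X })


section BetaProofAux
variable {A F : Type}

lemma subset_CnZ (D : ActionDescr A F) (S : Set (FLit F)) : S ⊆ CnZ D S :=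
  fun l hl X hX => hX.1 hl

lemma CnZ_subset (D : ActionDescr A F) {S T : Set (FLit F)} (hST : S ⊆ T)
    (hT : ∀ s ∈ D.stat, s.pre ⊆ T → s.hd ∈ T) : CnZ D S ⊆ T :=
  fun l hl => hl T ⟨hST, hT⟩

lemma CnZ_closed (D : ActionDescr A F) (S : Set (FLit F)) :
    ∀ s ∈ D.stat, s.pre ⊆ CnZ D S → s.hd ∈ CnZ D S := by
  intro s hs hpre X hX
  exact hX.2 s hs (fun l hl => hpre hl X hX)

lemma mem_of_compl_not_mem {σ : Set (FLit F)} (hc : FComplete σ) {l : FLit F}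
    (h : fcompl l ∉ σ) : l ∈ σ := by
  obtain ⟨f, b⟩ := l
  rcases b <;> rcases hc f with h1 | h1 <;> simp [fcompl] at h ⊢ <;> tauto

/-- The canonical model of a trajectory as a set of atoms. -/
def XM {A F : Type} (n : ℕ) (σ : ℕ → Set (FLit F)) (a : ℕ → Set A) :
    Set (AtomD A F) :=
  { x | match x with
        | AtomD.h l t => t ≤ n ∧ l ∈ σ t
        | AtomD.o e t => t < n ∧ e ∈ a t }

@[simp] lemma mem_XM_h {n : ℕ} {σ : ℕ → Set (FLit F)} {a : ℕ → Set A}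
    {l : FLit F} {t : ℕ} : AtomD.h l t ∈ XM n σ a ↔ t ≤ n ∧ l ∈ σ t := Iff.rfl

@[simp] lemma mem_XM_o {n : ℕ} {σ : ℕ → Set (FLit F)} {a : ℕ → Set A}
    {e : A} {t : ℕ} : (AtomD.o e t : AtomD A F) ∈ XM n σ a ↔ t < n ∧ e ∈ a t := Iff.rfl

variable {D : ActionDescr A F} {n : ℕ} {σ0 : Set (FLit F)} {a : ℕ → Set A}

lemma dyn_rule_mem {d : DynLaw A F} (hd : d ∈ D.dyn) {t : ℕ} (ht : t < n) :
    (⟨some (AtomD.h d.hd (t+1)),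
      (fun l => AtomD.h l t) '' d.pre ∪ {AtomD.o d.act t}, ∅⟩ : ASPRule (AtomD A F))
      ∈ betaNd D n σ0 a := by
  simp only [betaNd, Set.mem_union]
  exact Or.inl (Or.inl (Or.inl (Or.inl (Or.inl (Or.inl ⟨d, hd, t, ht, rfl⟩)))))

lemma stat_rule_mem {s : StatLaw F} (hs : s ∈ D.stat) {t : ℕ} (ht : t ≤ n) :
    (⟨some (AtomD.h s.hd t), (fun l => AtomD.h l t) '' s.pre, ∅⟩ : ASPRule (AtomD A F))
      ∈ betaNd D n σ0 a := by
  simp only [betaNd, Set.mem_union]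
  exact Or.inl (Or.inl (Or.inl (Or.inl (Or.inl (Or.inr ⟨s, hs, t, ht, rfl⟩)))))

lemma imp_rule_mem {i : ImpLaw A F} (hi : i ∈ D.imp) {t : ℕ} (ht : t < n) :
    (⟨none, (fun l => AtomD.h l t) '' i.pre ∪ {AtomD.o i.act t}, ∅⟩ : ASPRule (AtomD A F))
      ∈ betaNd D n σ0 a := by
  simp only [betaNd, Set.mem_union]
  exact Or.inl (Or.inl (Or.inl (Or.inl (Or.inr ⟨i, hi, t, ht, rfl⟩))))

lemma inertia_rule_mem (l : FLit F) {t : ℕ} (ht : t < n) :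
    (⟨some (AtomD.h l (t+1)), {AtomD.h l t}, {AtomD.h (fcompl l) (t+1)}⟩ : ASPRule (AtomD A F))
      ∈ betaNd D n σ0 a := by
  simp only [betaNd, Set.mem_union]
  exact Or.inl (Or.inl (Or.inl (Or.inr ⟨l, t, ht, rfl⟩)))

lemma constr_rule_mem (l : FLit F) {t : ℕ} (ht : t ≤ n) :
    (⟨none, {AtomD.h l t, AtomD.h (fcompl l) t}, ∅⟩ : ASPRule (AtomD A F))
      ∈ betaNd D n σ0 a := by
  simp only [betaNd, Set.mem_union]
  exact Or.inl (Or.inl (Or.inr ⟨l, t, ht, rfl⟩))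

lemma hfact_mem {l : FLit F} (hl : l ∈ σ0) :
    (fact (AtomD.h l 0) : ASPRule (AtomD A F)) ∈ betaNd D n σ0 a := by
  simp only [betaNd, Set.mem_union]
  exact Or.inl (Or.inr ⟨l, hl, rfl⟩)

lemma ofact_mem {e : A} {t : ℕ} (ht : t < n) (he : e ∈ a t) :
    (fact (AtomD.o e t) : ASPRule (AtomD A F)) ∈ betaNd D n σ0 a := by
  simp only [betaNd, Set.mem_union]
  exact Or.inr ⟨t, ht, e, he, rfl⟩

end BetaProofAux

/-- if `σ 0` is a state, the sequence
`M = ⟨σ0,a0,σ1,...,a_{n-1},σn⟩` is a trajectory of the transition diagram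
described by `SD` iff `M` is defined by an answer set of `β^n_d(M)`. -/
theorem betaNd_trajectory {A F : Type} (D : ActionDescr A F) (n : ℕ)
    (σ : ℕ → Set (FLit F)) (a : ℕ → Set A) (hσ0 : IsState D (σ 0)) :
    (∀ t < n, ALTrans D (σ t) (a t) (σ (t+1))) ↔
      ∃ X : Set (AtomD A F), AnswerSet (betaNd D n (σ 0) a) X ∧ Defines n X σ a := by
  constructor
  · intro hT
    have hstate : ∀ t ≤ n, IsState D (σ t) := by
      intro t ht
      cases t with
      | zero => exact hσ0
      | succ k => exact (hT k (by omega)).2.1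
    refine ⟨XM n σ a, ⟨?_, ?_⟩, ?_, ?_⟩
    · -- Closedness of the canonical model
      intro r hr hneg hpos
      simp only [betaNd, Set.mem_union, Set.mem_setOf_eq] at hr
      rcases hr with ((((((⟨d, hd, t, ht, rfl⟩ | ⟨s, hs, t, ht, rfl⟩) | ⟨i, hi, t, ht, rfl⟩) |
        ⟨l, t, ht, rfl⟩) | ⟨l, t, ht, rfl⟩) | ⟨l, hl, rfl⟩) | ⟨t, ht, e, he, rfl⟩)
      · -- dynamic law rules
        refine ⟨_, rfl, ?_⟩
        have hact : d.act ∈ a t := (hpos (Or.inr rfl)).2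
        have hpre : d.pre ⊆ σ t := fun l hl => (hpos (Or.inl ⟨l, hl, rfl⟩)).2
        refine ⟨by omega, ?_⟩
        rw [(hT t ht).2.2.2]
        exact subset_CnZ D _ (Or.inl ⟨d, hd, hact, hpre, rfl⟩)
      · -- static law rules
        exact ⟨_, rfl, ht, (hstate t ht).2.2 s hs (fun l hl => (hpos ⟨l, hl, rfl⟩).2)⟩
      · -- executability constraints
        exfalso
        have hact : i.act ∈ a t := (hpos (Or.inr rfl)).2
        have hpre : i.pre ⊆ σ t := fun l hl => (hpos (Or.inl ⟨l, hl, rfl⟩)).2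
        exact (hT t ht).2.2.1 i hi hact hpre
      · -- inertia rules
        refine ⟨_, rfl, ht, ?_⟩
        have hc : fcompl l ∉ σ (t+1) := fun hmem => hneg _ rfl ⟨ht, hmem⟩
        exact mem_of_compl_not_mem (hstate (t+1) ht).1 hc
      · -- consistency constraints
        exfalso
        have h1 : l ∈ σ t := (hpos (Or.inl rfl)).2
        have h2 : fcompl l ∈ σ t := (hpos (Or.inr rfl)).2
        exact (hstate t ht).2.1 l h1 h2
      · -- initial facts
        exact ⟨_, rfl, Nat.zero_le n, hl⟩
      · -- occurrence facts
        exact ⟨_, rfl, ht, he⟩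
    · -- Minimality
      intro Y hYX hYcl
      have oY : ∀ t < n, ∀ e ∈ a t, (AtomD.o e t : AtomD A F) ∈ Y := by
        intro t ht e he
        obtain ⟨w, hw, hwY⟩ := hYcl _ (ofact_mem ht he) (by simp [fact]) (by simp [fact])
        obtain rfl := Option.some.inj hw; exact hwY
      have hY : ∀ t ≤ n, ∀ l ∈ σ t, AtomD.h l t ∈ Y := by
        intro t
        induction t with
        | zero =>
          intro _ l hl
          obtain ⟨w, hw, hwY⟩ := hYcl _ (hfact_mem hl) (by simp [fact]) (by simp [fact])
          obtain rfl := Option.some.inj hw; exact hwY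
        | succ t ih =>
          intro ht l hl
          have ht' : t < n := by omega
          have ihn : ∀ l ∈ σ t, AtomD.h l t ∈ Y := ih (by omega)
          set Z : Set (FLit F) := { l | l ∈ σ (t+1) ∧ AtomD.h l (t+1) ∈ Y } with hZ
          have hE : dirEff D (a t) (σ t) ⊆ Z := by
            rintro x ⟨d, hd, hact, hpre, rfl⟩
            refine ⟨?_, ?_⟩
            · rw [(hT t ht').2.2.2]
              exact subset_CnZ D _ (Or.inl ⟨d, hd, hact, hpre, rfl⟩)
            · have hpos : ((fun l => AtomD.h l t) '' d.pre ∪ {AtomD.o d.act t}) ⊆ Y := by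
                intro x hx
                simp only [Set.mem_union, Set.mem_image, Set.mem_singleton_iff] at hx
                rcases hx with ⟨l, hl', rfl⟩ | rfl
                · exact ihn l (hpre hl')
                · exact oY t ht' d.act hact
              obtain ⟨w, hw, hwY⟩ := hYcl _ (dyn_rule_mem hd ht') (by simp) hpos
              obtain rfl := Option.some.inj hw; exact hwY
          have hI : σ t ∩ σ (t+1) ⊆ Z := by
            rintro l ⟨hl1, hl2⟩
            refine ⟨hl2, ?_⟩
            have hneg : ∀ x ∈ ({AtomD.h (fcompl l) (t+1)} : Set (AtomD A F)),
                x ∉ XM n σ a := by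
              intro x hx
              rw [Set.mem_singleton_iff] at hx; subst hx
              rw [mem_XM_h]
              rintro ⟨-, hc⟩
              exact (hstate (t+1) ht').2.1 l hl2 hc
            obtain ⟨w, hw, hwY⟩ := hYcl _ (inertia_rule_mem l ht') hneg
              (by intro x hx; rw [Set.mem_singleton_iff] at hx; subst hx; exact ihn l hl1)
            obtain rfl := Option.some.inj hw; exact hwY
          have hZc : ∀ s ∈ D.stat, s.pre ⊆ Z → s.hd ∈ Z := by
            intro s hs hpre
            refine ⟨(hstate (t+1) ht').2.2 s hs (fun l hl' => (hpre hl').1), ?_⟩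
            obtain ⟨w, hw, hwY⟩ := hYcl _ (stat_rule_mem hs (show t+1 ≤ n from ht'))
              (by simp) (by rintro x ⟨l, hl', rfl⟩; exact (hpre hl').2)
            obtain rfl := Option.some.inj hw; exact hwY
          have hsub : σ (t+1) ⊆ Z := by
            intro x hx
            rw [(hT t ht').2.2.2] at hx
            exact CnZ_subset D (Set.union_subset hE hI) hZc hx
          exact (hsub hl).2
      apply Set.Subset.antisymm hYX
      intro x hx
      cases x with
      | h l t => exact hY t hx.1 l hx.2
      | o e t => exact oY t hx.1 e hx.2
    · intro k hk; ext l
      simp only [Set.mem_setOf_eq, mem_XM_h]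
      exact ⟨fun h => ⟨hk, h⟩, fun h => h.2⟩
    · intro k hk; ext e
      simp only [Set.mem_setOf_eq, mem_XM_o]
      exact ⟨fun h => ⟨hk, h⟩, fun h => h.2⟩
  · rintro ⟨X, ⟨hcl, hmin⟩, hdefσ, hdefa⟩
    have hXh : ∀ (l : FLit F) (k : ℕ), k ≤ n → (l ∈ σ k ↔ AtomD.h l k ∈ X) := by
      intro l k hk; rw [hdefσ k hk]; exact Iff.rfl
    have hXo : ∀ (e : A) (k : ℕ), k < n → (e ∈ a k ↔ (AtomD.o e k : AtomD A F) ∈ X) := by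
      intro e k hk; rw [hdefa k hk]; exact Iff.rfl
    have step : ∀ t, t < n → IsState D (σ t) → IsState D (σ (t+1)) := by
      intro t ht hst
      have inert : ∀ l : FLit F, l ∈ σ t → fcompl l ∉ σ (t+1) → l ∈ σ (t+1) := by
        intro l hl hc
        obtain ⟨w, hw, hwX⟩ := hcl _ (inertia_rule_mem l ht)
          (by intro x hx; rw [Set.mem_singleton_iff] at hx; subst hx
              intro hmem; exact hc ((hXh _ (t+1) ht).2 hmem))
          (by intro x hx; rw [Set.mem_singleton_iff] at hx; subst hx
              exact (hXh l t (by omega)).1 hl)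
        obtain rfl := Option.some.inj hw
        exact (hXh l (t+1) ht).2 hwX
      have hcompl : FComplete (σ (t+1)) := by
        intro f
        by_contra hc
        push_neg at hc
        rcases hst.1 f with hl | hl
        · exact hc.1 (inert (f, true) hl (by simpa [fcompl] using hc.2))
        · exact hc.2 (inert (f, false) hl (by simpa [fcompl] using hc.1))
      have hcons : FConsistent (σ (t+1)) := by
        intro l hl hlc
        obtain ⟨w, hw, -⟩ := hcl _ (constr_rule_mem l (show t+1 ≤ n from ht))
          (by simp)
          (by rintro x (rfl | rfl)
              · exact (hXh l (t+1) ht).1 hl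
              · exact (hXh (fcompl l) (t+1) ht).1 hlc)
        cases hw
      have hstat : ClosedStat D (σ (t+1)) := by
        intro s hs hpre
        obtain ⟨w, hw, hwX⟩ := hcl _ (stat_rule_mem hs (show t+1 ≤ n from ht)) (by simp)
          (by rintro x ⟨l, hl, rfl⟩; exact (hXh l (t+1) ht).1 (hpre hl))
        obtain rfl := Option.some.inj hw
        exact (hXh _ (t+1) ht).2 hwX
      exact ⟨hcompl, hcons, hstat⟩
    have hstate : ∀ t ≤ n, IsState D (σ t) := by
      intro t
      induction t with
      | zero => exact fun _ => hσ0
      | succ k ih => intro hk; exact step k (by omega) (ih (by omega))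
    intro t ht
    have hst := hstate t (by omega)
    have hst' := hstate (t+1) ht
    have hE : dirEff D (a t) (σ t) ⊆ σ (t+1) := by
      rintro x ⟨d, hd, hact, hpre, rfl⟩
      obtain ⟨w, hw, hwX⟩ := hcl _ (dyn_rule_mem hd ht) (by simp)
        (by intro x hx
            simp only [Set.mem_union, Set.mem_image, Set.mem_singleton_iff] at hx
            rcases hx with ⟨l, hl, rfl⟩ | rfl
            · exact (hXh l t (by omega)).1 (hpre hl)
            · exact (hXo d.act t ht).1 hact)
      obtain rfl := Option.some.inj hw
      exact (hXh _ (t+1) ht).2 hwX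
    refine ⟨hst, hst', ?_, ?_⟩
    · intro i hi hact hpre
      obtain ⟨w, hw, -⟩ := hcl _ (imp_rule_mem hi ht) (by simp)
        (by intro x hx
            simp only [Set.mem_union, Set.mem_image, Set.mem_singleton_iff] at hx
            rcases hx with ⟨l, hl, rfl⟩ | rfl
            · exact (hXh l t (by omega)).1 (hpre hl)
            · exact (hXo i.act t ht).1 hact)
      cases hw
    · set C := CnZ D (dirEff D (a t) (σ t) ∪ (σ t ∩ σ (t+1))) with hC
      apply Set.Subset.antisymm
      · -- σ (t+1) ⊆ C, via minimality of X
        set R : Set (AtomD A F) :=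
          { x | ∃ l, x = AtomD.h l (t+1) ∧ l ∈ σ (t+1) ∧ l ∉ C } with hR
        have hYcl : Closed X (X \ R) (betaNd D n (σ 0) a) := by
          intro r hr hneg hpos
          have hposX : r.pos ⊆ X := hpos.trans Set.diff_subset
          simp only [betaNd, Set.mem_union, Set.mem_setOf_eq] at hr
          rcases hr with ((((((⟨d, hd, t', ht', rfl⟩ | ⟨s, hs, t', ht', rfl⟩) |
            ⟨i, hi, t', ht', rfl⟩) | ⟨l, t', ht', rfl⟩) | ⟨l, t', ht', rfl⟩) |
            ⟨l, hl, rfl⟩) | ⟨t', ht', e, he, rfl⟩)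
          · -- dynamic rules
            obtain ⟨w, hw, hwX⟩ := hcl _ (dyn_rule_mem hd ht') hneg hposX
            obtain rfl := Option.some.inj hw
            refine ⟨_, rfl, hwX, ?_⟩
            rintro ⟨l, hlx, hlσ, hlC⟩
            injection hlx with e1 e2
            obtain rfl : t = t' := by omega
            subst e1
            have hact : d.act ∈ a t := (hXo d.act t ht).2 (hposX (Or.inr rfl))
            have hpre : d.pre ⊆ σ t :=
              fun l' hl' => (hXh l' t (by omega)).2 (hposX (Or.inl ⟨l', hl', rfl⟩))
            exact hlC (subset_CnZ D _ (Or.inl ⟨d, hd, hact, hpre, rfl⟩))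
          · -- static rules
            obtain ⟨w, hw, hwX⟩ := hcl _ (stat_rule_mem hs ht') hneg hposX
            obtain rfl := Option.some.inj hw
            refine ⟨_, rfl, hwX, ?_⟩
            rintro ⟨l, hlx, hlσ, hlC⟩
            injection hlx with e1 e2
            subst e2
            subst e1
            have hpre : s.pre ⊆ C := by
              intro l' hl'
              have hx := hpos ⟨l', hl', rfl⟩
              by_contra hnc
              exact hx.2 ⟨l', rfl, (hXh l' (t+1) ht').2 hx.1, hnc⟩
            exact hlC (CnZ_closed D _ s hs hpre)
          · -- executability constraints
            obtain ⟨w, hw, -⟩ := hcl _ (imp_rule_mem hi ht') hneg hposX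
            cases hw
          · -- inertia rules
            obtain ⟨w, hw, hwX⟩ := hcl _ (inertia_rule_mem l ht') hneg hposX
            obtain rfl := Option.some.inj hw
            refine ⟨_, rfl, hwX, ?_⟩
            rintro ⟨l', hlx, hlσ, hlC⟩
            injection hlx with e1 e2
            obtain rfl : t = t' := by omega
            subst e1
            have hlt : l ∈ σ t := (hXh l t (by omega)).2 (hpos rfl).1
            exact hlC (subset_CnZ D _ (Or.inr ⟨hlt, hlσ⟩))
          · -- consistency constraints
            obtain ⟨w, hw, -⟩ := hcl _ (constr_rule_mem l ht') hneg hposX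
            cases hw
          · -- initial facts
            obtain ⟨w, hw, hwX⟩ := hcl _ (hfact_mem hl) hneg hposX
            obtain rfl := Option.some.inj hw
            refine ⟨_, rfl, hwX, ?_⟩
            rintro ⟨l', hlx, -, -⟩
            injection hlx with e1 e2
            omega
          · -- occurrence facts
            obtain ⟨w, hw, hwX⟩ := hcl _ (ofact_mem ht' he) hneg hposX
            obtain rfl := Option.some.inj hw
            refine ⟨_, rfl, hwX, ?_⟩
            rintro ⟨l', hlx, -, -⟩
            cases hlx
        have hEq := hmin _ Set.diff_subset hYcl
        intro l hl
        by_contra hnc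
        have hmem : AtomD.h l (t+1) ∈ X := (hXh l (t+1) ht).1 hl
        rw [← hEq] at hmem
        exact hmem.2 ⟨l, rfl, hl, hnc⟩
      · exact CnZ_subset D (Set.union_subset hE Set.inter_subset_right) hst'.2.2
end
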